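/- For all real t and all real x with |x| ≤ 1, sin(t·arcsin(x)) = ∑_{n≥0} (-1)^n · t · (∏_{i=0}^{n-1} (t² - (2i+1)²)) · x^{2n+1}/(2n+1)!. -/

import Mathlib

open Real Set Finset

noncomputable def aa (t : ℝ) (n : ℕ) : ℝ :=
  (-1)^n * t * (∏ i ∈ Finset.range n, (t^2 - (2*(i:ℝ)+1)^2)) / Nat.factorial (2*n+1)

lemma aa_zero (t : ℝ) : aa t 0 = t := by simp [aa]

lemma aa_succ (t : ℝ) (n : ℕ) :
    aa t (n+1) = aa t n * (((2*n+1:ℝ))^2 - t^2) / ((2*n+2)*(2*n+3)) := by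
  have h1 : 2*(n+1)+1 = (2*n+1) + 2 := by ring
  have h2 : (Nat.factorial (2*n+1+2) : ℝ) = (2*n+3) * (2*n+2) * Nat.factorial (2*n+1) := by
    rw [show 2*n+1+2 = (2*n+2)+1 by ring, Nat.factorial_succ, Nat.factorial_succ]
    push_cast; ring
  have hf : (0:ℝ) < Nat.factorial (2*n+1) := by positivity
  unfold aa
  rw [h1, h2, Finset.prod_range_succ]
  field_simp
  ring

noncomputable def bb (n : ℕ) : ℝ := 1 / ((2*n+1) * Real.sqrt (2*n+1))

lemma bb_pos (n : ℕ) : 0 < bb n := by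
  unfold bb; positivity

lemma summable_bb : Summable bb := by
  have h32 : Summable (fun n : ℕ => 1 / ((n:ℝ)+1) ^ ((3:ℝ)/2)) := by
    have := (Real.summable_one_div_nat_rpow (p := (3:ℝ)/2)).2 (by norm_num)
    have := (summable_nat_add_iff 1).2 this
    simpa using this
  refine Summable.of_nonneg_of_le (fun n => (bb_pos n).le) (fun n => ?_) h32
  unfold bb
  have hn1 : (0:ℝ) ≤ (n:ℝ)+1 := by positivity
  have key : ((n:ℝ)+1) ^ ((3:ℝ)/2) ≤ (2*n+1) * Real.sqrt (2*n+1) := by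
    have : ((n:ℝ)+1) ^ ((3:ℝ)/2) = ((n:ℝ)+1) * Real.sqrt ((n:ℝ)+1) := by
      rw [Real.sqrt_eq_rpow, ← Real.rpow_one_add' hn1 (by norm_num)]
      norm_num
    rw [this]
    have h1 : ((n:ℝ)+1) ≤ 2*n+1 := by linarith [Nat.cast_nonneg (α := ℝ) n]
    have h2 : Real.sqrt ((n:ℝ)+1) ≤ Real.sqrt (2*n+1) := Real.sqrt_le_sqrt h1
    have := Real.sqrt_nonneg ((n:ℝ)+1)
    nlinarith [Real.sqrt_nonneg ((2:ℝ)*n+1)]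
  rw [div_le_div_iff₀ (by positivity) (by positivity)]
  nlinarith [key]

lemma bb_step (n : ℕ) : bb n * (2*(n:ℝ)+1)^2 / ((2*n+2)*(2*n+3)) ≤ bb (n+1) := by
  have h1 : (0:ℝ) < 2*(n:ℝ)+1 := by positivity
  have h3 : (0:ℝ) < 2*(n:ℝ)+3 := by positivity
  have hs1 : Real.sqrt (2*(n:ℝ)+1) > 0 := Real.sqrt_pos.2 h1
  have hs3 : Real.sqrt (2*(n:ℝ)+3) > 0 := Real.sqrt_pos.2 h3
  have hbb1 : bb (n+1) = 1 / ((2*(n:ℝ)+3) * Real.sqrt (2*(n:ℝ)+3)) := by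
    unfold bb
    rw [show (2*((n:ℕ)+1:ℕ)+1 : ℝ) = 2*(n:ℝ)+3 by push_cast; ring]
  have hsq : Real.sqrt (2*(n:ℝ)+1) * Real.sqrt (2*(n:ℝ)+1) = 2*(n:ℝ)+1 :=
    Real.mul_self_sqrt h1.le
  have hkey : Real.sqrt (2*(n:ℝ)+1) * Real.sqrt (2*(n:ℝ)+3) ≤ 2*(n:ℝ)+2 := by
    rw [← Real.sqrt_mul h1.le]
    have : (2*(n:ℝ)+1) * (2*(n:ℝ)+3) ≤ (2*(n:ℝ)+2)^2 := by nlinarith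
    calc Real.sqrt ((2*(n:ℝ)+1) * (2*(n:ℝ)+3)) ≤ Real.sqrt ((2*(n:ℝ)+2)^2) :=
          Real.sqrt_le_sqrt this
      _ = 2*(n:ℝ)+2 := Real.sqrt_sq (by positivity)
  have h4 := mul_le_mul_of_nonneg_left hkey (Real.sqrt_nonneg (2*(n:ℝ)+1))
  rw [← mul_assoc, hsq] at h4
  rw [hbb1]
  unfold bb
  rw [div_mul_eq_mul_div, div_div, div_le_div_iff₀ (by positivity) (by positivity)]
  have h5 := mul_le_mul_of_nonneg_left h4 (by positivity : (0:ℝ) ≤ (2*(n:ℝ)+1)*(2*(n:ℝ)+3))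
  nlinarith [h5]

lemma summable_abs_aa (t : ℝ) : Summable (fun n => |aa t n|) := by
  set N := Nat.ceil |t| with hN
  have ht : |t| ≤ 2*(N:ℝ)+1 := by
    have := Nat.le_ceil |t|
    linarith [Nat.cast_nonneg (α := ℝ) N]
  set K := |aa t N| / bb N with hK
  have hKnn : 0 ≤ K := div_nonneg (abs_nonneg _) (bb_pos N).le
  have key : ∀ m, |aa t (m + N)| ≤ K * bb (m + N) := by
    intro m
    induction m with
    | zero =>
      simp only [zero_add, hK]
      rw [div_mul_cancel₀ _ (bb_pos N).ne']
    | succ m ih =>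
      have hn : (N:ℝ) ≤ (m:ℝ) + N := by linarith [Nat.cast_nonneg (α := ℝ) m]
      set n := m + N with hn'
      have hcast : ((n:ℕ):ℝ) = (m:ℝ) + N := by push_cast [hn']; ring
      have htn : |t| ≤ 2*(n:ℝ)+1 := by rw [hcast]; linarith
      have habs : |aa t (n+1)| ≤ |aa t n| * (2*(n:ℝ)+1)^2 / ((2*n+2)*(2*n+3)) := by
        rw [aa_succ, abs_div, abs_mul]
        have hd : |(2*(n:ℝ)+2)*(2*n+3)| = (2*(n:ℝ)+2)*(2*n+3) := by
          rw [abs_of_pos]; positivity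
        rw [hd]
        have hnum : |(2*(n:ℝ)+1)^2 - t^2| ≤ (2*(n:ℝ)+1)^2 := by
          rw [abs_sub_le_iff]
          constructor
          · nlinarith [sq_nonneg t]
          · nlinarith [sq_abs t, abs_nonneg t, sq_nonneg (2*(n:ℝ)+1)]
        apply div_le_div_of_nonneg_right ?_ (by positivity)
        exact mul_le_mul_of_nonneg_left hnum (abs_nonneg _)
      calc |aa t (m+1+N)| = |aa t (n+1)| := by rw [hn']; ring_nf
        _ ≤ |aa t n| * (2*(n:ℝ)+1)^2 / ((2*n+2)*(2*n+3)) := habs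
        _ ≤ K * bb n * (2*(n:ℝ)+1)^2 / ((2*n+2)*(2*n+3)) := by
            apply div_le_div_of_nonneg_right ?_ (by positivity)
            exact mul_le_mul_of_nonneg_right ih (by positivity)
        _ = K * (bb n * (2*(n:ℝ)+1)^2 / ((2*n+2)*(2*n+3))) := by ring
        _ ≤ K * bb (n+1) := mul_le_mul_of_nonneg_left (bb_step n) hKnn
        _ = K * bb (m+1+N) := by rw [hn']; ring_nf
  have hsum : Summable (fun m => |aa t (m + N)|) := by
    apply Summable.of_nonneg_of_le (fun m => abs_nonneg _) key
    exact (((summable_nat_add_iff N).2 summable_bb).mul_left K)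
  exact (summable_nat_add_iff N).1 hsum

-- abbreviations
noncomputable def ff (t : ℝ) (n : ℕ) (y : ℝ) : ℝ := aa t n * Real.sin y ^ (2*n+1)
noncomputable def dd1 (t : ℝ) (n : ℕ) (y : ℝ) : ℝ :=
  aa t n * ((2*(n:ℝ)+1) * Real.sin y ^ (2*n) * Real.cos y)
noncomputable def dd2 (t : ℝ) (n : ℕ) (y : ℝ) : ℝ :=
  (aa t n * (2*(n:ℝ)+1)) * (((2*n:ℕ):ℝ) * Real.sin y ^ (2*n-1) * Real.cos y * Real.cos y
    + Real.sin y ^ (2*n) * (-Real.sin y))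

lemma hasDerivAt_ff (t : ℝ) (n : ℕ) (y : ℝ) : HasDerivAt (ff t n) (dd1 t n y) y := by
  have h := ((Real.hasDerivAt_sin y).pow (2*n+1)).const_mul (aa t n)
  refine h.congr_deriv ?_
  unfold dd1
  rw [show (2*n+1-1 : ℕ) = 2*n by omega]
  push_cast
  ring

lemma hasDerivAt_dd1 (t : ℝ) (n : ℕ) (y : ℝ) : HasDerivAt (dd1 t n) (dd2 t n y) y := by
  have h := (((Real.hasDerivAt_sin y).pow (2*n)).mul (Real.hasDerivAt_cos y)).const_mul
    (aa t n * (2*(n:ℝ)+1))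
  have hfun : (fun y => (aa t n * (2*(n:ℝ)+1)) * (Real.sin y ^ (2*n) * Real.cos y)) = dd1 t n := by
    funext z; unfold dd1; ring
  have h' : HasDerivAt (fun y => (aa t n * (2*(n:ℝ)+1)) * (Real.sin y ^ (2*n) * Real.cos y))
      (dd2 t n y) y :=
    h.congr_deriv (by unfold dd2; rfl)
  rw [hfun] at h'
  exact h'

noncomputable def CC (t : ℝ) : ℝ := ∑' n, |aa t n|

lemma abs_aa_le (t : ℝ) (n : ℕ) : |aa t n| ≤ CC t :=
  Summable.le_tsum (summable_abs_aa t) n (fun _ _ => abs_nonneg _)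

lemma CC_nonneg (t : ℝ) : 0 ≤ CC t := (abs_nonneg _).trans (abs_aa_le t 0)

lemma summable_poly_geom (c₀ c₁ c₂ : ℝ) {q : ℝ} (h0 : 0 ≤ q) (h1 : q < 1) :
    Summable (fun n : ℕ => (c₂*(n:ℝ)^2 + c₁*(n:ℝ) + c₀) * q^n) := by
  have hq : ‖q‖ < 1 := by rwa [Real.norm_eq_abs, abs_of_nonneg h0]
  have s2 := (summable_pow_mul_geometric_of_norm_lt_one 2 hq (R := ℝ)).mul_left c₂
  have s1 := (summable_pow_mul_geometric_of_norm_lt_one 1 hq (R := ℝ)).mul_left c₁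
  have s0 := (summable_geometric_of_lt_one h0 h1).mul_left c₀
  have := (s2.add s1).add s0
  refine this.congr fun n => ?_
  push_cast
  ring

lemma summable_ff (t : ℝ) {x : ℝ} (hx : |x| ≤ 1) :
    Summable (fun n => aa t n * x ^ (2*n+1)) := by
  refine Summable.of_norm ?_
  refine Summable.of_nonneg_of_le (fun n => norm_nonneg _) (fun n => ?_) (summable_abs_aa t)
  rw [Real.norm_eq_abs, abs_mul, abs_pow]
  calc |aa t n| * |x| ^ (2*n+1) ≤ |aa t n| * 1 := by
        apply mul_le_mul_of_nonneg_left _ (abs_nonneg _)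
        exact pow_le_one₀ (abs_nonneg x) hx
    _ = |aa t n| := mul_one _

lemma abs_sin_le_of_mem {b y : ℝ} (hb0 : 0 < b) (hb : b < π/2) (hy : y ∈ Set.Ioo (-b) b) :
    |Real.sin y| ≤ Real.sin b := by
  obtain ⟨h1, h2⟩ := hy
  have hmem : ∀ z : ℝ, -b ≤ z → z ≤ b → z ∈ Set.Icc (-(π/2)) (π/2) := by
    intro z hz1 hz2
    constructor <;> [linarith; linarith]
  have hmono := Real.strictMonoOn_sin.monotoneOn
  have hub : Real.sin y ≤ Real.sin b :=
    hmono (hmem y h1.le h2.le) (hmem b (by linarith) le_rfl) h2.le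
  have hlb : Real.sin (-b) ≤ Real.sin y :=
    hmono (hmem (-b) le_rfl (by linarith)) (hmem y h1.le h2.le) h1.le
  rw [Real.sin_neg] at hlb
  exact abs_le.2 ⟨by linarith, hub⟩

lemma sin_lt_one_of_lt {b : ℝ} (hb0 : 0 < b) (hb : b < π/2) : Real.sin b < 1 := by
  have := Real.strictMonoOn_sin (Set.mem_Icc.2 ⟨by linarith, hb.le⟩)
    (Set.mem_Icc.2 ⟨by linarith [Real.pi_pos], le_rfl⟩) hb
  rwa [Real.sin_pi_div_two] at this

lemma hasDerivAt_F (t : ℝ) {b : ℝ} (hb0 : 0 < b) (hb : b < π/2) {y : ℝ}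
    (hy : y ∈ Set.Ioo (-b) b) :
    HasDerivAt (fun z => ∑' n, ff t n z) (∑' n, dd1 t n y) y := by
  set r := Real.sin b with hr
  have hr0 : 0 < r := Real.sin_pos_of_pos_of_lt_pi hb0 (by linarith [Real.pi_pos, Real.pi_gt_three])
  have hr1 : r < 1 := sin_lt_one_of_lt hb0 hb
  have hq0 : (0:ℝ) ≤ r^2 := sq_nonneg r
  have hq1 : r^2 < 1 := pow_lt_one₀ hr0.le hr1 (by norm_num)
  refine hasDerivAt_tsum_of_isPreconnected
    (u := fun n : ℕ => CC t * (2*(n:ℝ)+1) * (r^2)^n) (g := ff t) (g' := dd1 t)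
    ?_ isOpen_Ioo isPreconnected_Ioo
    (fun n z _ => hasDerivAt_ff t n z) ?_ (Set.mem_Ioo.2 ⟨by linarith, hb0⟩) ?_ hy
  · refine (summable_poly_geom (CC t) (2*CC t) 0 hq0 hq1).congr fun n => ?_
    ring
  · intro n z hz
    have hs : |Real.sin z| ≤ r := abs_sin_le_of_mem hb0 hb hz
    have hc : |Real.cos z| ≤ 1 := Real.abs_cos_le_one z
    rw [Real.norm_eq_abs]
    unfold dd1
    rw [abs_mul, abs_mul, abs_mul, abs_pow]
    have h1 : |2*(n:ℝ)+1| = 2*(n:ℝ)+1 := abs_of_nonneg (by positivity)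
    rw [h1]
    calc |aa t n| * ((2*(n:ℝ)+1) * |Real.sin z| ^ (2*n) * |Real.cos z|)
        ≤ CC t * ((2*(n:ℝ)+1) * r ^ (2*n) * 1) := by
          gcongr <;> first
            | exact CC_nonneg t | exact abs_aa_le t n | exact hs | exact hc | positivity
      _ = CC t * (2*(n:ℝ)+1) * (r^2)^n := by rw [mul_one, ← pow_mul]; ring
  · refine summable_zero.congr fun n => ?_
    simp [ff, Real.sin_zero, zero_pow (by omega : 2*n+1 ≠ 0)]

lemma hasDerivAt_G (t : ℝ) {b : ℝ} (hb0 : 0 < b) (hb : b < π/2) {y : ℝ}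
    (hy : y ∈ Set.Ioo (-b) b) :
    HasDerivAt (fun z => ∑' n, dd1 t n z) (∑' n, dd2 t n y) y := by
  set r := Real.sin b with hr
  have hr0 : 0 < r := Real.sin_pos_of_pos_of_lt_pi hb0 (by linarith [Real.pi_gt_three])
  have hr1 : r < 1 := sin_lt_one_of_lt hb0 hb
  have hq0 : (0:ℝ) ≤ r^2 := sq_nonneg r
  have hq1 : r^2 < 1 := pow_lt_one₀ hr0.le hr1 (by norm_num)
  refine hasDerivAt_tsum_of_isPreconnected
    (u := fun n : ℕ => (CC t / r) * (2*(n:ℝ)+1)^2 * (r^2)^n) (g := dd1 t) (g' := dd2 t)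
    ?_ isOpen_Ioo isPreconnected_Ioo
    (fun n z _ => hasDerivAt_dd1 t n z) ?_ (Set.mem_Ioo.2 ⟨by linarith, hb0⟩) ?_ hy
  · refine (summable_poly_geom (CC t / r) (4*(CC t / r)) (4*(CC t / r)) hq0 hq1).congr
      fun n => ?_
    ring
  · intro n z hz
    have hs : |Real.sin z| ≤ r := abs_sin_le_of_mem hb0 hb hz
    have hs1 : |Real.sin z| ≤ 1 := hs.trans hr1.le
    have hc : |Real.cos z| ≤ 1 := Real.abs_cos_le_one z
    have hCr : 0 ≤ CC t / r := div_nonneg (CC_nonneg t) hr0.le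
    rw [Real.norm_eq_abs]
    unfold dd2
    have step1 : |aa t n * (2*(n:ℝ)+1) *
        (((2*n:ℕ):ℝ) * Real.sin z ^ (2*n-1) * Real.cos z * Real.cos z
          + Real.sin z ^ (2*n) * (-Real.sin z))|
        ≤ CC t * (2*(n:ℝ)+1) * ((2*(n:ℝ)) * r^(2*n-1) + r^(2*n)) := by
      rw [abs_mul, abs_mul]
      have h1 : |2*(n:ℝ)+1| = 2*(n:ℝ)+1 := abs_of_nonneg (by positivity)
      rw [h1]
      have hinner : |((2*n:ℕ):ℝ) * Real.sin z ^ (2*n-1) * Real.cos z * Real.cos z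
          + Real.sin z ^ (2*n) * (-Real.sin z)| ≤ (2*(n:ℝ)) * r^(2*n-1) + r^(2*n) := by
        refine (abs_add_le _ _).trans ?_
        have e1 : |((2*n:ℕ):ℝ) * Real.sin z ^ (2*n-1) * Real.cos z * Real.cos z|
            ≤ (2*(n:ℝ)) * r^(2*n-1) := by
          rw [abs_mul, abs_mul, abs_mul, abs_pow, Nat.abs_cast]
          push_cast
          calc (2*(n:ℝ)) * |Real.sin z| ^ (2*n-1) * |Real.cos z| * |Real.cos z|
              ≤ (2*(n:ℝ)) * r ^ (2*n-1) * 1 * 1 := by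
                gcongr <;> first | exact hs | exact hc | positivity
            _ = (2*(n:ℝ)) * r^(2*n-1) := by ring
        have e2 : |Real.sin z ^ (2*n) * (-Real.sin z)| ≤ r^(2*n) := by
          rw [abs_mul, abs_pow, abs_neg]
          calc |Real.sin z| ^ (2*n) * |Real.sin z| ≤ r ^ (2*n) * 1 := by
                gcongr <;> first | exact hs | exact hs1 | positivity
            _ = r^(2*n) := by ring
        linarith
      have h2 : |aa t n| * (2*(n:ℝ)+1) ≤ CC t * (2*(n:ℝ)+1) :=
        mul_le_mul_of_nonneg_right (abs_aa_le t n) (by positivity)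
      exact mul_le_mul h2 hinner (abs_nonneg _) (mul_nonneg (CC_nonneg t) (by positivity))
    refine le_trans step1 ?_
    show CC t * (2*(n:ℝ)+1) * ((2*(n:ℝ)) * r^(2*n-1) + r^(2*n))
      ≤ (CC t / r) * (2*(n:ℝ)+1)^2 * (r^2)^n
    -- now: CC (2n+1)(2n r^(2n-1) + r^(2n)) ≤ (CC/r)(2n+1)^2 (r^2)^n
    have key : (2*(n:ℝ)) * r^(2*n-1) + r^(2*n) ≤ (2*(n:ℝ)+1) * ((1/r) * (r^2)^n) := by
      have hrpow : r^(2*n-1) ≤ (1/r) * (r^2)^n := by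
        cases n with
        | zero =>
          simp only [Nat.mul_zero, Nat.zero_sub, pow_zero, mul_one]
          rw [le_div_iff₀ hr0, one_mul]  -- may need adjust
          exact hr1.le
        | succ m =>
          have e : 2*(m+1)-1 = 2*m+1 := by omega
          rw [e, ← pow_mul, div_mul_eq_mul_div, le_div_iff₀ hr0]
          exact le_of_eq (by ring)
      have hrpow2 : r^(2*n) ≤ (1/r) * (r^2)^n := by
        rw [← pow_mul, one_div, le_inv_mul_iff₀ hr0]
        calc r * r^(2*n) = r^(2*n+1) := by rw [pow_succ]; ring
          _ ≤ r^(2*n) := pow_le_pow_of_le_one hr0.le hr1.le (by omega)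
      have hn0 : (0:ℝ) ≤ 2*(n:ℝ) := by positivity
      nlinarith [mul_le_mul_of_nonneg_left hrpow hn0]
    have hmul : 0 ≤ CC t * (2*(n:ℝ)+1) := mul_nonneg (CC_nonneg t) (by positivity)
    calc CC t * (2*(n:ℝ)+1) * ((2*(n:ℝ)) * r^(2*n-1) + r^(2*n))
        ≤ CC t * (2*(n:ℝ)+1) * ((2*(n:ℝ)+1) * ((1/r) * (r^2)^n)) :=
          mul_le_mul_of_nonneg_left key hmul
      _ = (CC t / r) * (2*(n:ℝ)+1)^2 * (r^2)^n := by ring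
  · refine summable_of_ne_finset_zero (s := {0}) fun n hn => ?_
    have hn0 : n ≠ 0 := by simpa using hn
    simp [dd1, Real.sin_zero, zero_pow (by omega : 2*n ≠ 0)]

lemma tsum_dd2_eq (t : ℝ) {y : ℝ} (hsy : |Real.sin y| < 1) :
    ∑' n, dd2 t n y = -t^2 * ∑' n, ff t n y := by
  set s := Real.sin y with hsdef
  have hq0 : (0:ℝ) ≤ s^2 := sq_nonneg s
  have hq1 : s^2 < 1 := by
    have := abs_nonneg s
    nlinarith [sq_abs s]
  set pp : ℕ → ℝ := fun n => aa t n * ((2*(n:ℝ)+1)^2 - t^2) * s^(2*n+1) with hppdef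
  set uu : ℕ → ℝ := fun n => aa t n * (2*(n:ℝ)) * (2*(n:ℝ)+1) * s^(2*n-1) with huudef
  have hspp : Summable pp := by
    refine Summable.of_norm ?_
    refine Summable.of_nonneg_of_le (fun n => norm_nonneg _) (fun n => ?_)
      ((summable_poly_geom (CC t * (1 + t^2)) (4*CC t) (4*CC t) hq0 hq1))
    rw [Real.norm_eq_abs, hppdef]
    simp only
    rw [abs_mul, abs_mul, abs_pow]
    have h1 : |(2*(n:ℝ)+1)^2 - t^2| ≤ (2*(n:ℝ)+1)^2 + t^2 := by
      refine (abs_sub _ _).trans ?_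
      rw [abs_of_nonneg (by positivity : (0:ℝ) ≤ (2*(n:ℝ)+1)^2), abs_of_nonneg (sq_nonneg t)]
    have h2 : |s| ^ (2*n+1) ≤ (s^2)^n := by
      calc |s| ^ (2*n+1) ≤ |s| ^ (2*n) := pow_le_pow_of_le_one (abs_nonneg s) hsy.le (by omega)
        _ = (s^2)^n := by rw [← sq_abs, ← pow_mul]
    calc |aa t n| * |(2*(n:ℝ)+1)^2 - t^2| * |s|^(2*n+1)
        ≤ CC t * ((2*(n:ℝ)+1)^2 + t^2) * (s^2)^n := by
          have := mul_le_mul (mul_le_mul (abs_aa_le t n) h1 (abs_nonneg _) (CC_nonneg t))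
            h2 (pow_nonneg (abs_nonneg s) _)
            (mul_nonneg (CC_nonneg t) (by positivity))
          exact this
      _ = (4*CC t*(n:ℝ)^2 + 4*CC t*(n:ℝ) + CC t * (1 + t^2)) * (s^2)^n := by ring
  have hu_succ : ∀ n : ℕ, uu (n+1) = pp n := by
    intro n
    rw [huudef, hppdef]
    simp only
    rw [aa_succ, show (2*(n+1)-1 : ℕ) = 2*n+1 by omega]
    have h1 : (2*(n:ℝ)+2) ≠ 0 := by positivity
    have h2 : (2*(n:ℝ)+3) ≠ 0 := by positivity
    push_cast
    field_simp
    ring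
  have hsuu : Summable uu := by
    refine (summable_nat_add_iff 1).1 ?_
    exact hspp.congr fun n => (hu_succ n).symm
  have huu0 : uu 0 = 0 := by rw [huudef]; simp
  have htuu : ∑' n, uu n = ∑' n, pp n := by
    rw [Summable.tsum_eq_zero_add hsuu, huu0, zero_add]
    exact tsum_congr hu_succ
  have hsf : Summable (fun n => ff t n y) := by
    have := summable_ff t (x := s) hsy.le
    exact this.congr fun n => by rw [ff]
  have hterm : ∀ n, dd2 t n y = uu n - pp n - t^2 * ff t n y := by
    intro n
    have hc2 : Real.cos y * Real.cos y = 1 - s ^ 2 := by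
      have := Real.cos_sq' y
      nlinarith [this]
    cases n with
    | zero =>
      rw [huudef, hppdef]
      simp only [dd2, ff]
      norm_num
      ring
    | succ m =>
      rw [huudef, hppdef]
      simp only [dd2, ff, show (2*(m+1)-1 : ℕ) = 2*m+1 by omega,
        show (2*(m+1) : ℕ) = 2*m+2 by omega, show (2*(m+1)+1 : ℕ) = 2*m+3 by omega]
      push_cast
      have expand : aa t (m+1) * (2*((m:ℝ)+1)+1) *
          ((2*(m:ℝ)+2) * Real.sin y^(2*m+1) * Real.cos y * Real.cos y
            + Real.sin y^(2*m+2) * -Real.sin y)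
        = aa t (m+1) * (2*((m:ℝ)+1)+1) *
          ((2*(m:ℝ)+2) * Real.sin y^(2*m+1) * (Real.cos y * Real.cos y)
            + Real.sin y^(2*m+2) * -Real.sin y) := by ring
      rw [expand, hc2, hsdef]
      ring
  calc ∑' n, dd2 t n y = ∑' n, (uu n - pp n - t^2 * ff t n y) := tsum_congr hterm
    _ = (∑' n, (uu n - pp n)) - ∑' n, t^2 * ff t n y :=
        Summable.tsum_sub (hsuu.sub hspp) (hsf.mul_left _)
    _ = ((∑' n, uu n) - ∑' n, pp n) - t^2 * ∑' n, ff t n y := by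
        rw [Summable.tsum_sub hsuu hspp, tsum_mul_left]
    _ = -t^2 * ∑' n, ff t n y := by rw [htuu]; ring

noncomputable def FF (t : ℝ) : ℝ → ℝ := fun z => ∑' n, ff t n z
noncomputable def GG (t : ℝ) : ℝ → ℝ := fun z => ∑' n, dd1 t n z

lemma FF_cont (t : ℝ) : Continuous (FF t) := by
  refine continuous_tsum (fun n => ?_) (summable_abs_aa t) (fun n x => ?_)
  · exact continuous_const.mul (Real.continuous_sin.pow _)
  · rw [Real.norm_eq_abs, ff, abs_mul, abs_pow]
    have h1 : |Real.sin x| ^ (2*n+1) ≤ 1 :=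
      pow_le_one₀ (abs_nonneg _) (Real.abs_sin_le_one x)
    have := mul_le_mul_of_nonneg_left h1 (abs_nonneg (aa t n))
    simpa using this

lemma FF_zero (t : ℝ) : FF t 0 = 0 := by
  rw [FF]
  have : ∀ n, ff t n 0 = 0 := fun n => by
    simp [ff, Real.sin_zero, zero_pow (by omega : 2*n+1 ≠ 0)]
  simp [this]

lemma GG_zero (t : ℝ) : GG t 0 = t := by
  rw [GG]
  rw [tsum_eq_single 0 (fun n hn => by
    simp [dd1, Real.sin_zero, zero_pow (by omega : 2*n ≠ 0)])]
  simp [dd1, aa_zero]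

lemma interior_eq (t : ℝ) {θ : ℝ} (hθ : θ ∈ Set.Ioo (-(π/2)) (π/2)) :
    FF t θ = Real.sin (t*θ) := by
  rcases eq_or_ne t 0 with rfl | ht
  · have : ∀ n z, ff 0 n z = 0 := fun n z => by simp [ff, aa]
    simp [FF, this]
  set b := (|θ| + π/2)/2 with hbdef
  have hθpi : |θ| < π/2 := abs_lt.2 ⟨hθ.1, hθ.2⟩
  have hθb : |θ| < b := by rw [hbdef]; linarith
  have hb : b < π/2 := by rw [hbdef]; linarith
  have hb0 : 0 < b := by rw [hbdef]; positivity
  set S := Set.Ioo (-b) b with hSdef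
  have hmemθ : θ ∈ S := by
    have := abs_lt.1 hθb
    exact ⟨this.1, this.2⟩
  have hmem0 : (0:ℝ) ∈ S := ⟨by linarith, hb0⟩
  have hsinz : ∀ z ∈ S, |Real.sin z| < 1 := fun z hz =>
    (abs_sin_le_of_mem hb0 hb hz).trans_lt (sin_lt_one_of_lt hb0 hb)
  set g : ℝ → ℝ := fun z => FF t z - Real.sin (t*z) with hgdef
  set g1 : ℝ → ℝ := fun z => GG t z - t * Real.cos (t*z) with hg1def
  have hg : ∀ z ∈ S, HasDerivAt g (g1 z) z := by
    intro z hz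
    have h1 := hasDerivAt_F t hb0 hb hz
    have hinner : HasDerivAt (fun w : ℝ => t*w) t z := by
      simpa using (hasDerivAt_id z).const_mul t
    have h2 : HasDerivAt (fun w => Real.sin (t*w)) (Real.cos (t*z) * t) z := hinner.sin
    have h3 := h1.sub h2
    refine h3.congr_deriv ?_
    simp only [hg1def, GG]
    ring
  have hg1 : ∀ z ∈ S, HasDerivAt g1 (-t^2 * g z) z := by
    intro z hz
    have h1 := hasDerivAt_G t hb0 hb hz
    rw [tsum_dd2_eq t (hsinz z hz)] at h1
    have hinner : HasDerivAt (fun w : ℝ => t*w) t z := by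
      simpa using (hasDerivAt_id z).const_mul t
    have h2 : HasDerivAt (fun w => t * Real.cos (t*w)) (t * (-Real.sin (t*z) * t)) z :=
      hinner.cos.const_mul t
    have h3 := h1.sub h2
    refine h3.congr_deriv ?_
    simp only [hgdef, FF]
    ring
  set E : ℝ → ℝ := fun z => g1 z^2 + t^2 * g z^2 with hEdef
  have hE : ∀ z ∈ S, HasDerivAt E 0 z := by
    intro z hz
    have h := ((hg1 z hz).pow 2).add (((hg z hz).pow 2).const_mul (t^2))
    refine h.congr_deriv ?_
    push_cast
    ring
  have hE0 : E 0 = 0 := by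
    rw [hEdef]
    simp only [hgdef, hg1def, FF_zero, GG_zero, mul_zero, Real.sin_zero, Real.cos_zero]
    ring
  have hEθ : E θ = 0 := by
    rcases lt_trichotomy θ 0 with hlt | heq | hgt
    · have hsub : Set.Icc θ 0 ⊆ S := fun z hz =>
        ⟨lt_of_lt_of_le hmemθ.1 hz.1, lt_of_le_of_lt hz.2 hmem0.2⟩
      obtain ⟨c, _, hceq⟩ := exists_hasDerivAt_eq_slope E (fun _ => 0) hlt
        (fun z hz => ((hE z (hsub hz)).continuousAt.continuousWithinAt))
        (fun z hz => hE z (hsub (Set.Ioo_subset_Icc_self hz)))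
      rw [hE0] at hceq
      rw [eq_comm, div_eq_iff (by linarith : (0:ℝ) - θ ≠ 0)] at hceq
      linarith
    · rw [heq]; exact hE0
    · have hsub : Set.Icc 0 θ ⊆ S := fun z hz =>
        ⟨lt_of_lt_of_le hmem0.1 hz.1, lt_of_le_of_lt hz.2 hmemθ.2⟩
      obtain ⟨c, _, hceq⟩ := exists_hasDerivAt_eq_slope E (fun _ => 0) hgt
        (fun z hz => ((hE z (hsub hz)).continuousAt.continuousWithinAt))
        (fun z hz => hE z (hsub (Set.Ioo_subset_Icc_self hz)))
      rw [hE0] at hceq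
      rw [eq_comm, div_eq_iff (by linarith : θ - (0:ℝ) ≠ 0)] at hceq
      linarith
  have ht2 : 0 < t^2 := by positivity
  have hgθ : g θ = 0 := by
    have h1 : g1 θ ^2 + t^2 * g θ^2 = 0 := hEθ
    have h2 : g θ ^ 2 = 0 := by nlinarith [sq_nonneg (g1 θ), sq_nonneg (g θ)]
    exact pow_eq_zero_iff (by norm_num) |>.1 h2
  have := sub_eq_zero.1 hgθ
  exact this

lemma icc_eq (t : ℝ) {θ : ℝ} (hθ : θ ∈ Set.Icc (-(π/2)) (π/2)) :
    FF t θ = Real.sin (t*θ) := by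
  have hcont2 : Continuous (fun z => Real.sin (t*z)) :=
    Real.continuous_sin.comp (continuous_const.mul continuous_id)
  have h := Set.EqOn.closure (fun z hz => interior_eq t hz) (FF_cont t) hcont2
  rw [closure_Ioo (by linarith [Real.pi_pos] : -(π/2) ≠ π/2)] at h
  exact h hθ

theorem sin_t_arcsin_series (t x : ℝ) (hx : |x| ≤ 1) :
    HasSum (fun n : ℕ =>
      (-1) ^ n * t * (∏ i ∈ Finset.range n, (t ^ 2 - (2 * (i : ℝ) + 1) ^ 2))
        * x ^ (2 * n + 1) / Nat.factorial (2 * n + 1))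
      (Real.sin (t * Real.arcsin x)) := by
  obtain ⟨h1, h2⟩ := abs_le.1 hx
  have hsum : Summable (fun n => aa t n * x^(2*n+1)) := summable_ff t hx
  have hfun : (fun n : ℕ =>
      (-1) ^ n * t * (∏ i ∈ Finset.range n, (t ^ 2 - (2 * (i : ℝ) + 1) ^ 2))
        * x ^ (2 * n + 1) / Nat.factorial (2 * n + 1))
      = fun n => aa t n * x^(2*n+1) := by
    funext n
    rw [aa]
    ring
  rw [hfun]
  have key : ∑' n, aa t n * x^(2*n+1) = Real.sin (t * Real.arcsin x) := by
    calc ∑' n, aa t n * x^(2*n+1) = ∑' n, ff t n (Real.arcsin x) :=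
        tsum_congr fun n => by rw [ff, Real.sin_arcsin h1 h2]
      _ = Real.sin (t * Real.arcsin x) := icc_eq t (Real.arcsin_mem_Icc x)
  have := hsum.hasSum
  rwa [key] at this
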